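/- Let R = ℤ[t, t^{-1}] and let K be the group of 3×3 matrices (A, B, C, D) := [[1, B, D], [0, A, C], [0, 0, 1]] over R with B, C, D ∈ R and A a power of t. Let N_0 = {(1, 0, 0, D) : D ∈ ℤ[t]} and Z' = {(1, 0, 0, D) : D ∈ 2ℤ + tℤ[t]}, central subgroups of K, and set G := K/N_0 and H := K/Z'. Then G and H are generating-bijective: there exist a generating-surjection from G onto H and a generating-surjection from H onto G. -/

import Mathlib

open Pointwise
open scoped commutatorElement


open LaurentPolynomial

/-- The ring `R = ℤ[t, t⁻¹]` of Laurent polynomials over `ℤ`. -/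
abbrev LaurentZ : Type := LaurentPolynomial ℤ

/-- The upper triangular matrix `(A, B, C, D) = [[1, B, D], [0, A, C], [0, 0, 1]]`. -/
noncomputable def Mquad (A B C D : LaurentZ) : Matrix (Fin 3) (Fin 3) LaurentZ :=
  !![1, B, D; 0, A, C; 0, 0, 1]

/-- The set of invertible `3 × 3` matrices over `ℤ[t, t⁻¹]` of the form `(A, B, C, D)` with
`A = tᵏ` for some `k : ℤ`. -/
def Kset : Set (Matrix (Fin 3) (Fin 3) LaurentZ)ˣ :=
  { u | ∃ (k : ℤ) (B C D : LaurentZ),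
      (u : Matrix (Fin 3) (Fin 3) LaurentZ) = Mquad (T k) B C D }

/-- `g` is an ordered generating tuple of `G`. -/
def Generates {G : Type*} [Group G] {n : ℕ} (g : Fin n → G) : Prop :=
  Subgroup.closure (Set.range g) = ⊤

/-- A group homomorphism `φ : G →* H` is a generating-surjection if every ordered
generating tuple of `H` lifts to an ordered generating tuple of `G` along `φ`. -/
def GeneratingSurjection {G H : Type*} [Group G] [Group H] (φ : G →* H) : Prop :=
  ∀ (n : ℕ) (h : Fin n → H), Generates h →
    ∃ g : Fin n → G, Generates g ∧ ∀ i, φ (g i) = h i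

theorem Mquad_mul (A B C D X Y Z W : LaurentZ) :
    Mquad A B C D * Mquad X Y Z W = Mquad (A*X) (B*X+Y) (C+A*Z) (D+B*Z+W) := by
  ext i j
  fin_cases i <;> fin_cases j <;>
    simp [Mquad, Matrix.mul_apply, Fin.sum_univ_three, Matrix.vecHead, Matrix.vecTail] <;> ring

theorem Mquad_one : Mquad 1 0 0 0 = 1 := by
  ext i j
  fin_cases i <;> fin_cases j <;>
    simp [Mquad, Matrix.one_apply, Matrix.vecHead, Matrix.vecTail]

theorem Mquad_congr {A B C D A' B' C' D' : LaurentZ} (h1 : A = A') (h2 : B = B')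
    (h3 : C = C') (h4 : D = D') : Mquad A B C D = Mquad A' B' C' D' := by
  subst h1 h2 h3 h4; rfl

theorem Mquad_inj {A B C D A' B' C' D' : LaurentZ}
    (h : Mquad A B C D = Mquad A' B' C' D') : A = A' ∧ B = B' ∧ C = C' ∧ D = D' := by
  refine ⟨?_, ?_, ?_, ?_⟩
  · have := congrFun (congrFun h 1) 1; simpa [Mquad] using this
  · have := congrFun (congrFun h 0) 1; simpa [Mquad] using this
  · have := congrFun (congrFun h 1) 2; simpa [Mquad] using this
  · have := congrFun (congrFun h 0) 2; simpa [Mquad] using this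

theorem T_inj : Function.Injective (T : ℤ → LaurentZ) := fun _ _ h =>
  AddMonoidAlgebra.single_left_injective one_ne_zero h

theorem T_mul_T_neg (k : ℤ) : (T k : LaurentZ) * T (-k) = 1 := by
  rw [← T_add]; simp

/-- Model group. -/
@[ext] structure Q where
  k : ℤ
  B : LaurentZ
  C : LaurentZ
  D : LaurentZ

noncomputable instance : Mul Q :=
  ⟨fun a b => ⟨a.k + b.k, a.B * T b.k + b.B, a.C + T a.k * b.C, a.D + a.B * b.C + b.D⟩⟩
noncomputable instance : One Q := ⟨⟨0, 0, 0, 0⟩⟩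
noncomputable instance : Inv Q :=
  ⟨fun a => ⟨-a.k, -(a.B * T (-a.k)), -(a.C * T (-a.k)), a.B * a.C * T (-a.k) - a.D⟩⟩

theorem Q.mul_def (a b : Q) : a * b =
    ⟨a.k + b.k, a.B * T b.k + b.B, a.C + T a.k * b.C, a.D + a.B * b.C + b.D⟩ := rfl
theorem Q.inv_def (a : Q) : a⁻¹ =
    ⟨-a.k, -(a.B * T (-a.k)), -(a.C * T (-a.k)), a.B * a.C * T (-a.k) - a.D⟩ := rfl
theorem Q.one_def : (1 : Q) = ⟨0, 0, 0, 0⟩ := rfl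

noncomputable instance : Group Q where
  mul_assoc a b c := by
    refine Q.ext ?_ ?_ ?_ ?_ <;> simp only [Q.mul_def, T_add] <;> ring
  one_mul a := by
    refine Q.ext ?_ ?_ ?_ ?_ <;> simp [Q.mul_def, Q.one_def, T_zero]
  mul_one a := by
    refine Q.ext ?_ ?_ ?_ ?_ <;> simp [Q.mul_def, Q.one_def, T_zero]
  inv_mul_cancel a := by
    have h := T_mul_T_neg a.k
    refine Q.ext ?_ ?_ ?_ ?_ <;> simp only [Q.mul_def, Q.inv_def, Q.one_def]
    · simp
    · linear_combination (-a.B) * h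
    · ring
    · ring

/-- The explicit unit corresponding to `q : Q`. -/
noncomputable def mk3unit (q : Q) : (Matrix (Fin 3) (Fin 3) LaurentZ)ˣ where
  val := Mquad (T q.k) q.B q.C q.D
  inv := Mquad (T (-q.k)) (-(q.B * T (-q.k))) (-(q.C * T (-q.k))) (q.B * q.C * T (-q.k) - q.D)
  val_inv := by
    have h := T_mul_T_neg q.k
    rw [Mquad_mul]
    refine (Mquad_congr ?_ ?_ ?_ ?_).trans Mquad_one
    · exact h
    · ring
    · linear_combination (-q.C) * h
    · ring
  inv_val := by
    have h : (T (-q.k) : LaurentZ) * T q.k = 1 := by rw [← T_add]; simp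
    rw [Mquad_mul]
    refine (Mquad_congr ?_ ?_ ?_ ?_).trans Mquad_one
    · exact h
    · linear_combination (-q.B) * h
    · ring
    · ring

theorem mk3unit_val (q : Q) : (mk3unit q : Matrix (Fin 3) (Fin 3) LaurentZ) =
    Mquad (T q.k) q.B q.C q.D := rfl

section WithK

variable (K : Subgroup (Matrix (Fin 3) (Fin 3) LaurentZ)ˣ)

theorem mk3unit_memK (hK : (K : Set (Matrix (Fin 3) (Fin 3) LaurentZ)ˣ) = Kset)
    (q : Q) : mk3unit q ∈ K := by
  have : mk3unit q ∈ (K : Set (Matrix (Fin 3) (Fin 3) LaurentZ)ˣ) := by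
    rw [hK]; exact ⟨q.k, q.B, q.C, q.D, rfl⟩
  exact this

variable (hK : (K : Set (Matrix (Fin 3) (Fin 3) LaurentZ)ˣ) = Kset)

/-- The embedding of the model group into `K`. -/
noncomputable def κ : Q →* K where
  toFun q := ⟨mk3unit q, mk3unit_memK K hK q⟩
  map_one' := by
    apply Subtype.ext; apply Units.ext
    show Mquad (T (0:ℤ)) 0 0 0 = 1
    rw [T_zero]; exact Mquad_one
  map_mul' a b := by
    apply Subtype.ext; apply Units.ext
    show Mquad (T (a*b).k) (a*b).B (a*b).C (a*b).D
        = Mquad (T a.k) a.B a.C a.D * Mquad (T b.k) b.B b.C b.D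
    rw [Mquad_mul, Q.mul_def]
    exact Mquad_congr (by rw [T_add]) rfl rfl rfl

theorem κ_injective : Function.Injective (κ K hK) := by
  intro a b h
  have hv : Mquad (T a.k) a.B a.C a.D = Mquad (T b.k) b.B b.C b.D :=
    congrArg (fun u : K => ((u : (Matrix (Fin 3) (Fin 3) LaurentZ)ˣ) :
      Matrix (Fin 3) (Fin 3) LaurentZ)) h
  obtain ⟨h1, h2, h3, h4⟩ := Mquad_inj hv
  exact Q.ext (T_inj h1) h2 h3 h4

theorem κ_surjective : Function.Surjective (κ K hK) := by
  intro u
  have hu : (u : (Matrix (Fin 3) (Fin 3) LaurentZ)ˣ) ∈ Kset := by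
    rw [← hK]; exact u.2
  obtain ⟨k, B, C, D, hval⟩ := hu
  refine ⟨⟨k, B, C, D⟩, ?_⟩
  apply Subtype.ext; apply Units.ext
  exact hval.symm

/-- The model group is isomorphic to `K`. -/
noncomputable def eQK : Q ≃* K :=
  MulEquiv.ofBijective (κ K hK) ⟨κ_injective K hK, κ_surjective K hK⟩

theorem eQK_apply (q : Q) : eQK K hK q = κ K hK q := rfl

end WithK

/-- The automorphism of `Q` scaling the `C` and `D` coordinates by `t`. -/
noncomputable def δQ : Q ≃* Q where
  toFun q := ⟨q.k, q.B, T 1 * q.C, T 1 * q.D⟩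
  invFun q := ⟨q.k, q.B, T (-1) * q.C, T (-1) * q.D⟩
  left_inv q := by
    refine Q.ext rfl rfl ?_ ?_ <;>
      · dsimp only; rw [← mul_assoc, ← T_add]; norm_num
  right_inv q := by
    refine Q.ext rfl rfl ?_ ?_ <;>
      · dsimp only; rw [← mul_assoc, ← T_add]; norm_num
  map_mul' a b := by
    refine Q.ext rfl rfl ?_ ?_ <;> simp only [Q.mul_def] <;> ring

theorem comm_central {G : Type*} [Group G] (a b z w : G)
    (hz : z ∈ Subgroup.center G) (hw : w ∈ Subgroup.center G) :
    ⁅a * z, b * w⁆ = ⁅a, b⁆ := by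
  have hz' := Subgroup.mem_center_iff.mp hz
  have hw' := Subgroup.mem_center_iff.mp hw
  simp only [commutatorElement_def, mul_inv_rev]
  rw [mul_assoc a z (b*w), ← hz' (b*w)]
  simp only [mul_assoc, mul_inv_cancel_left]
  rw [← mul_assoc w a⁻¹, ← hw' a⁻¹]
  simp only [mul_assoc, mul_inv_cancel_left]

theorem gen_map {G H : Type*} [Group G] [Group H] (f : G →* H)
    (hf : Function.Surjective f) {n : ℕ} (x : Fin n → G) (hx : Generates x) :
    Generates (fun i => f (x i)) := by
  unfold Generates at *
  have h1 : Set.range (fun i => f (x i)) = f '' Set.range x := by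
    rw [← Set.range_comp]; rfl
  rw [h1, ← MonoidHom.map_closure, hx]
  rw [← MonoidHom.range_eq_map]
  exact (MonoidHom.range_eq_top).mpr hf

theorem genLemma {G : Type*} [Group G] (N : Subgroup G) [N.Normal]
    (hcen : ∀ z ∈ N, z ∈ Subgroup.center G)
    (hcom : ∀ z ∈ N, ∃ u v : G, z = ⁅u, v⁆)
    {n : ℕ} (x : Fin n → G)
    (hx : Generates (fun i => QuotientGroup.mk' N (x i))) :
    Generates x := by
  set L := Subgroup.closure (Set.range x) with hL
  have hmap : Subgroup.map (QuotientGroup.mk' N) L = ⊤ := by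
    rw [hL, MonoidHom.map_closure]
    have : (QuotientGroup.mk' N) '' Set.range x
        = Set.range (fun i => QuotientGroup.mk' N (x i)) := by
      rw [← Set.range_comp]; rfl
    rw [this]; exact hx
  have hsup : L ⊔ N = ⊤ := by
    have h := Subgroup.comap_map_eq (QuotientGroup.mk' N) L
    rw [hmap, QuotientGroup.ker_mk'] at h
    simpa using h.symm
  have hdecomp : ∀ g : G, ∃ l ∈ L, ∃ z ∈ N, g = l * z := by
    intro g
    have hg : g ∈ ((L : Set G) * (N : Set G)) := by
      rw [← Subgroup.mul_normal, hsup]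
      trivial
    obtain ⟨l, hl, z, hz, hlz⟩ := Set.mem_mul.mp hg
    exact ⟨l, hl, z, hz, hlz.symm⟩
  have hNL : N ≤ L := by
    intro z hz
    obtain ⟨u, v, huv⟩ := hcom z hz
    obtain ⟨l₁, hl₁, z₁, hz₁, rfl⟩ := hdecomp u
    obtain ⟨l₂, hl₂, z₂, hz₂, rfl⟩ := hdecomp v
    rw [huv, comm_central l₁ l₂ z₁ z₂ (hcen z₁ hz₁) (hcen z₂ hz₂)]
    exact L.mul_mem (L.mul_mem (L.mul_mem hl₁ hl₂) (L.inv_mem hl₁)) (L.inv_mem hl₂)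
  unfold Generates
  rw [← hL, ← hsup, sup_eq_left.mpr hNL]

theorem Qc_center (D : LaurentZ) : (⟨0, 0, 0, D⟩ : Q) ∈ Subgroup.center Q := by
  rw [Subgroup.mem_center_iff]
  intro g
  refine Q.ext ?_ ?_ ?_ ?_ <;> simp [Q.mul_def, T_zero] <;> ring

theorem Qc_comm (D : LaurentZ) :
    (⟨0, 0, 0, D⟩ : Q) = ⁅(⟨0, D, 0, 0⟩ : Q), (⟨0, 0, 1, 0⟩ : Q)⁆ := by
  rw [commutatorElement_def]
  refine Q.ext ?_ ?_ ?_ ?_ <;>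
    simp [Q.mul_def, Q.inv_def, T_zero] <;> ring

section WithK2

variable (K : Subgroup (Matrix (Fin 3) (Fin 3) LaurentZ)ˣ)
    (hK : (K : Set (Matrix (Fin 3) (Fin 3) LaurentZ)ˣ) = Kset)

theorem κ_center (D : LaurentZ) : κ K hK ⟨0, 0, 0, D⟩ ∈ Subgroup.center K := by
  rw [Subgroup.mem_center_iff]
  intro g
  obtain ⟨q, rfl⟩ := κ_surjective K hK g
  rw [← map_mul, ← map_mul, Subgroup.mem_center_iff.mp (Qc_center D) q]

theorem memN₀_iff (N₀ : Subgroup K)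
    (hN₀ : (N₀ : Set K) = { u : K | ∃ D : Polynomial ℤ,
        ((u : (Matrix (Fin 3) (Fin 3) LaurentZ)ˣ) : Matrix (Fin 3) (Fin 3) LaurentZ) =
          Mquad 1 0 0 D.toLaurent }) (u : K) :
    u ∈ N₀ ↔ ∃ p : Polynomial ℤ, u = κ K hK ⟨0, 0, 0, p.toLaurent⟩ := by
  constructor
  · intro hu
    have hu' : u ∈ (N₀ : Set K) := hu
    rw [hN₀] at hu'
    obtain ⟨p, hp⟩ := hu'
    refine ⟨p, ?_⟩
    apply Subtype.ext; apply Units.ext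
    show _ = Mquad (T (0:ℤ)) 0 0 p.toLaurent
    rw [T_zero]; exact hp
  · rintro ⟨p, rfl⟩
    show κ K hK ⟨0, 0, 0, p.toLaurent⟩ ∈ (N₀ : Set K)
    rw [hN₀]
    refine ⟨p, ?_⟩
    show Mquad (T (0:ℤ)) 0 0 p.toLaurent = _
    rw [T_zero]

theorem memZ'_iff (Z' : Subgroup K)
    (hZ' : (Z' : Set K) = { u : K | ∃ D : Polynomial ℤ, Even (D.coeff 0) ∧
        ((u : (Matrix (Fin 3) (Fin 3) LaurentZ)ˣ) : Matrix (Fin 3) (Fin 3) LaurentZ) =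
          Mquad 1 0 0 D.toLaurent }) (u : K) :
    u ∈ Z' ↔ ∃ p : Polynomial ℤ, Even (p.coeff 0) ∧
      u = κ K hK ⟨0, 0, 0, p.toLaurent⟩ := by
  constructor
  · intro hu
    have hu' : u ∈ (Z' : Set K) := hu
    rw [hZ'] at hu'
    obtain ⟨p, hev, hp⟩ := hu'
    refine ⟨p, hev, ?_⟩
    apply Subtype.ext; apply Units.ext
    show _ = Mquad (T (0:ℤ)) 0 0 p.toLaurent
    rw [T_zero]; exact hp
  · rintro ⟨p, hev, rfl⟩
    show κ K hK ⟨0, 0, 0, p.toLaurent⟩ ∈ (Z' : Set K)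
    rw [hZ']
    refine ⟨p, hev, ?_⟩
    show Mquad (T (0:ℤ)) 0 0 p.toLaurent = _
    rw [T_zero]

end WithK2

theorem stmt19 (K : Subgroup (Matrix (Fin 3) (Fin 3) LaurentZ)ˣ)
    (hK : (K : Set (Matrix (Fin 3) (Fin 3) LaurentZ)ˣ) = Kset)
    (N₀ Z' : Subgroup K)
    -- `N₀ = {(1,0,0,D) : D ∈ ℤ[t]}`
    (hN₀ : (N₀ : Set K) = { u : K | ∃ D : Polynomial ℤ,
        ((u : (Matrix (Fin 3) (Fin 3) LaurentZ)ˣ) : Matrix (Fin 3) (Fin 3) LaurentZ) =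
          Mquad 1 0 0 D.toLaurent })
    -- `Z' = {(1,0,0,D) : D ∈ 2ℤ + tℤ[t]}`
    (hZ' : (Z' : Set K) = { u : K | ∃ D : Polynomial ℤ, Even (D.coeff 0) ∧
        ((u : (Matrix (Fin 3) (Fin 3) LaurentZ)ˣ) : Matrix (Fin 3) (Fin 3) LaurentZ) =
          Mquad 1 0 0 D.toLaurent })
    [hN : N₀.Normal] [hZ : Z'.Normal] :
    ∃ (φ : (K ⧸ N₀) →* (K ⧸ Z')) (ψ : (K ⧸ Z') →* (K ⧸ N₀)),
      GeneratingSurjection φ ∧ GeneratingSurjection ψ := by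
  -- the isomorphism with the model group
  set e : Q ≃* K := eQK K hK with he
  -- the automorphism of `K` scaling `C` and `D` by `t`
  set δK : K ≃* K := (e.symm.trans δQ).trans e with hδK
  have hδκ : ∀ q : Q, δK (κ K hK q) = κ K hK (δQ q) := by
    intro q
    show e (δQ (e.symm (e q))) = e (δQ q)
    rw [MulEquiv.symm_apply_apply]
  -- `Z' ≤ N₀`
  have hZN : Z' ≤ N₀ := by
    intro u hu
    obtain ⟨p, _, rfl⟩ := (memZ'_iff K hK Z' hZ' u).mp hu
    exact (memN₀_iff K hK N₀ hN₀ _).mpr ⟨p, rfl⟩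
  -- `δK` maps `N₀` into `Z'`
  have hδN₀Z' : ∀ u ∈ N₀, δK u ∈ Z' := by
    intro u hu
    obtain ⟨p, rfl⟩ := (memN₀_iff K hK N₀ hN₀ u).mp hu
    rw [hδκ]
    have hq : δQ (⟨0, 0, 0, p.toLaurent⟩ : Q) = ⟨0, 0, 0, (Polynomial.X * p).toLaurent⟩ := by
      show (⟨0, 0, T 1 * 0, T 1 * p.toLaurent⟩ : Q) = _
      refine Q.ext rfl rfl (mul_zero _) ?_
      show T 1 * p.toLaurent = (Polynomial.X * p).toLaurent
      rw [map_mul, Polynomial.toLaurent_X]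
    rw [hq]
    refine (memZ'_iff K hK Z' hZ' _).mpr ⟨Polynomial.X * p, ?_, rfl⟩
    rw [Polynomial.mul_coeff_zero, Polynomial.coeff_X_zero, zero_mul]
    exact Even.zero
  -- centrality and commutators for elements of `N₀`
  have hcenN : ∀ z ∈ N₀, z ∈ Subgroup.center K := by
    intro z hz
    obtain ⟨p, rfl⟩ := (memN₀_iff K hK N₀ hN₀ z).mp hz
    exact κ_center K hK _
  have hcomN : ∀ z ∈ N₀, ∃ u v : K, z = ⁅u, v⁆ := by
    intro z hz
    obtain ⟨p, rfl⟩ := (memN₀_iff K hK N₀ hN₀ z).mp hz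
    refine ⟨κ K hK ⟨0, p.toLaurent, 0, 0⟩, κ K hK ⟨0, 0, 1, 0⟩, ?_⟩
    rw [← map_commutatorElement, ← Qc_comm]
  -- the two homomorphisms
  refine ⟨QuotientGroup.lift N₀ ((QuotientGroup.mk' Z').comp δK.toMonoidHom)
      (by intro u hu; exact MonoidHom.mem_ker.mpr ((QuotientGroup.eq_one_iff _).mpr (hδN₀Z' u hu))),
    QuotientGroup.lift Z' (QuotientGroup.mk' N₀)
      (by intro u hu; exact MonoidHom.mem_ker.mpr ((QuotientGroup.eq_one_iff _).mpr (hZN hu))), ?_, ?_⟩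
  · -- φ is a generating surjection
    intro n h hgen
    choose kfun hkfun using fun i => QuotientGroup.mk'_surjective Z' (h i)
    have hk : Generates (fun i => QuotientGroup.mk' Z' (kfun i)) := by
      have : (fun i => QuotientGroup.mk' Z' (kfun i)) = h := funext hkfun
      rw [this]; exact hgen
    have hkgen : Generates kfun :=
      genLemma Z' (fun z hz => hcenN z (hZN hz)) (fun z hz => hcomN z (hZN hz)) kfun hk
    have hxgen : Generates (fun i => δK.symm (kfun i)) :=
      gen_map δK.symm.toMonoidHom (MulEquiv.surjective δK.symm) kfun hkgen
    refine ⟨fun i => QuotientGroup.mk' N₀ (δK.symm (kfun i)),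
      gen_map (QuotientGroup.mk' N₀) (QuotientGroup.mk'_surjective N₀) _ hxgen, ?_⟩
    intro i
    beta_reduce
    rw [QuotientGroup.mk'_apply, QuotientGroup.lift_mk, MonoidHom.comp_apply]
    have : δK.toMonoidHom (δK.symm (kfun i)) = kfun i := MulEquiv.apply_symm_apply δK _
    rw [this]
    exact hkfun i
  · -- ψ is a generating surjection
    intro n g hgen
    choose kfun hkfun using fun i => QuotientGroup.mk'_surjective N₀ (g i)
    have hk : Generates (fun i => QuotientGroup.mk' N₀ (kfun i)) := by
      have : (fun i => QuotientGroup.mk' N₀ (kfun i)) = g := funext hkfun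
      rw [this]; exact hgen
    have hkgen : Generates kfun := genLemma N₀ hcenN hcomN kfun hk
    refine ⟨fun i => QuotientGroup.mk' Z' (kfun i),
      gen_map (QuotientGroup.mk' Z') (QuotientGroup.mk'_surjective Z') _ hkgen, ?_⟩
    intro i
    beta_reduce
    rw [QuotientGroup.mk'_apply, QuotientGroup.lift_mk]
    exact hkfun i
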